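/- Let A be a complex unital Banach algebra and a, b ∈ A. Define iterated commutators by ∇⁰b = b and ∇^{j+1}b = a·(∇^j b) − (∇^j b)·a. Then for every t ∈ ℝ and every integer n ≥ 1, one has exp(−t·a)·b = Σ_{j=0}^{n−1} ((−t)^j / j!)·(∇^j b)·exp(−t·a) + ((−t)^n/(n−1)!)·∫₀¹ (1−s)^{n−1}·exp(−s·t·a)·(∇^n b)·exp(−(1−s)·t·a) ds. -/

import Mathlib

set_option maxHeartbeats 1000000
open scoped Nat
open NormedSpace
namespace Stmt12Aux
variable {A : Type*} [NormedRing A] [NormedAlgebra ℂ A] [CompleteSpace A]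

noncomputable def P (a M : A) (t s : ℝ) : A :=
  exp ((-(↑s * ↑t) : ℂ) • a) * M * exp ((-((1 - ↑s) * ↑t) : ℂ) • a)

lemma contP (a M : A) (t : ℝ) : Continuous (P a M t) := by
  letI : NormedAlgebra ℚ A := NormedAlgebra.restrictScalars ℚ ℂ A
  have h1 : Continuous fun s : ℝ => ((-(↑s * ↑t) : ℂ)) • a := by fun_prop
  have h2 : Continuous fun s : ℝ => ((-((1 - ↑s) * ↑t) : ℂ)) • a := by fun_prop
  exact ((exp_continuous.comp h1).mul continuous_const).mul (exp_continuous.comp h2)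

omit [CompleteSpace A] in
lemma commE (a : A) (z : ℂ) : a * exp (z • a) = exp (z • a) * a :=
  (((Commute.refl a).smul_right z).exp_right).eq

lemma derivP (a M : A) (t s : ℝ) :
    HasDerivAt (P a M t) ((-(t : ℂ)) • P a (a * M - M * a) t s) s := by
  have h1 : HasDerivAt (fun s : ℝ => exp ((-(↑s * ↑t) : ℂ) • a))
      ((-(t:ℂ)) • (exp ((-(↑s*↑t):ℂ) • a) * a)) s := by
    have hg := hasDerivAt_exp_smul_const (𝕂 := ℂ) a ((-(↑s*↑t) : ℂ))
    have hf : HasDerivAt (fun s : ℝ => (-(↑s * ↑t) : ℂ)) (-(t:ℂ)) s := by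
      simpa [Pi.neg_def] using ((Complex.ofRealCLM.hasDerivAt (x := s)).mul_const (t:ℂ)).neg
    have h := HasDerivAt.scomp s hg hf
    simp only [Function.comp_def] at h
    simpa using h
  have h2 : HasDerivAt (fun s : ℝ => exp ((-((1 - ↑s) * ↑t) : ℂ) • a))
      ((t:ℂ) • (exp ((-((1-↑s)*↑t):ℂ) • a) * a)) s := by
    have hg := hasDerivAt_exp_smul_const (𝕂 := ℂ) a ((-((1-↑s)*↑t) : ℂ))
    have hf : HasDerivAt (fun s : ℝ => (-((1 - ↑s) * ↑t) : ℂ)) ((t:ℂ)) s := by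
      simpa [Pi.neg_def] using (((Complex.ofRealCLM.hasDerivAt (x := s)).const_sub (1:ℂ)).mul_const (t:ℂ)).neg
    have h := HasDerivAt.scomp s hg hf
    simp only [Function.comp_def] at h
    simpa using h
  have h := (h1.mul_const M).mul h2
  have hkey : (-(t:ℂ)) • P a (a*M - M*a) t s
      = (-(t:ℂ)) • (exp ((-(↑s*↑t):ℂ) • a) * a) * M * exp ((-((1-↑s)*↑t):ℂ) • a)
        + exp ((-(↑s*↑t):ℂ) • a) * M * ((t:ℂ) • (exp ((-((1-↑s)*↑t):ℂ) • a) * a)) := by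
    simp only [P]
    have hc : exp ((-((1-↑s)*↑t):ℂ) • a) * a = a * exp ((-((1-↑s)*↑t):ℂ) • a) :=
      (commE a _).symm
    set e1 := exp ((-(↑s*↑t):ℂ) • a)
    set e2 := exp ((-((1-↑s)*↑t):ℂ) • a)
    simp only [smul_mul_assoc, mul_smul_comm, mul_sub, sub_mul, smul_sub, mul_assoc, hc, neg_smul]
    abel_nf
    simp only [smul_mul_assoc, mul_assoc]
    exact add_comm _ _
  rw [hkey]
  exact h


omit [CompleteSpace A] in
lemma real_smul_eq (r : ℝ) (x : A) : r • x = ((r:ℂ)) • x := by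
  rw [← algebraMap_smul ℂ r x, Complex.coe_algebraMap]


lemma evalP1 (a M : A) (t : ℝ) : P a M t 1 = exp ((-(t:ℂ)) • a) * M := by
  simp [P]

lemma evalP0 (a M : A) (t : ℝ) : P a M t 0 = M * exp ((-(t:ℂ)) • a) := by
  simp [P]

lemma ftcP (a M : A) (t : ℝ) :
    exp ((-(t:ℂ)) • a) * M - M * exp ((-(t:ℂ)) • a)
      = (-(t:ℂ)) • ∫ s in (0:ℝ)..1, P a (a * M - M * a) t s := by
  have h := intervalIntegral.integral_eq_sub_of_hasDerivAt
    (f := P a M t) (f' := fun s => (-(t:ℂ)) • P a (a * M - M * a) t s)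
    (fun s _ => derivP a M t s)
    (((contP a (a*M - M*a) t).const_smul _).intervalIntegrable 0 1)
  rw [intervalIntegral.integral_smul] at h
  rw [h, evalP1, evalP0]

lemma stepP (a M : A) (t : ℝ) (n : ℕ) (hn : 1 ≤ n) :
    ∫ s in (0:ℝ)..1, ((1-s)^(n-1) : ℝ) • P a M t s
      = ((n:ℝ)⁻¹) • (M * exp ((-(t:ℂ)) • a))
        - ((t:ℂ)/(n:ℂ)) • ∫ s in (0:ℝ)..1, ((1-s)^n : ℝ) • P a (a*M - M*a) t s := by
  have hn' : (n:ℝ) ≠ 0 := Nat.cast_ne_zero.mpr (by omega)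
  have hcoef : ∀ s : ℝ, HasDerivAt (fun s : ℝ => -(1-s)^n / n) ((1-s)^(n-1)) s := by
    intro s
    have h0 : HasDerivAt (fun s : ℝ => 1 - s) (-1) s := (hasDerivAt_id s).const_sub 1
    have h := ((h0.pow n).neg).div_const (n:ℝ)
    refine h.congr_deriv ?_
    rw [div_eq_iff hn']; ring
  have hG : ∀ s : ℝ, HasDerivAt (fun s : ℝ => (-(1-s)^n / n : ℝ) • P a M t s)
      (((1-s)^(n-1) : ℝ) • P a M t s
        + ((-(1-s)^n / n : ℝ)) • ((-(t:ℂ)) • P a (a*M - M*a) t s)) s := by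
    intro s
    have h := (hcoef s).smul (derivP a M t s)
    rwa [add_comm] at h
  have hint1 : IntervalIntegrable (fun s : ℝ => ((1-s)^(n-1) : ℝ) • P a M t s)
      MeasureTheory.volume 0 1 :=
    (Continuous.smul (by fun_prop : Continuous fun s : ℝ => ((1-s)^(n-1) : ℝ)) (contP a M t)).intervalIntegrable 0 1
  have hint2 : IntervalIntegrable
      (fun s : ℝ => ((-(1-s)^n / n : ℝ)) • ((-(t:ℂ)) • P a (a*M - M*a) t s))
      MeasureTheory.volume 0 1 :=
    (Continuous.smul (by fun_prop : Continuous fun s : ℝ => ((-(1-s)^n / n : ℝ))) ((contP a (a*M-M*a) t).const_smul _)).intervalIntegrable 0 1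
  have hft := intervalIntegral.integral_eq_sub_of_hasDerivAt (fun s _ => hG s)
    (hint1.add hint2)
  rw [intervalIntegral.integral_add hint1 hint2] at hft
  have hend : ((-(1-(1:ℝ))^n / n : ℝ)) • P a M t 1 - ((-(1-(0:ℝ))^n / n : ℝ)) • P a M t 0
      = ((n:ℝ)⁻¹) • (M * exp ((-(t:ℂ)) • a)) := by
    rw [evalP0]
    have : (1 - (1:ℝ)) ^ n = 0 := by
      rw [sub_self]; exact zero_pow (by omega)
    rw [this]
    simp [neg_div]
  rw [hend] at hft
  have hsec : (∫ s in (0:ℝ)..1, ((-(1-s)^n / n : ℝ)) • ((-(t:ℂ)) • P a (a*M - M*a) t s))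
      = ((t:ℂ)/n) • ∫ s in (0:ℝ)..1, ((1-s)^n : ℝ) • P a (a*M - M*a) t s := by
    rw [← intervalIntegral.integral_smul]
    apply intervalIntegral.integral_congr
    intro s _
    have h1 : ((-(1-s)^n / n : ℝ)) • ((-(t:ℂ)) • P a (a*M - M*a) t s)
        = (((-(1-s)^n / n : ℝ) : ℂ) * (-(t:ℂ))) • P a (a*M - M*a) t s := by
      rw [real_smul_eq, smul_smul]
    have h2 : ((t:ℂ)/n) • (((1-s)^n : ℝ) • P a (a*M - M*a) t s)
        = (((t:ℂ)/n) * (((1-s)^n : ℝ) : ℂ)) • P a (a*M - M*a) t s := by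
      rw [real_smul_eq, smul_smul]
    show ((-(1-s)^n / n : ℝ)) • ((-(t:ℂ)) • P a (a*M - M*a) t s)
        = ((t:ℂ)/n) • (((1-s)^n : ℝ) • P a (a*M - M*a) t s)
    rw [h1, h2]
    congr 1
    push_cast
    field_simp
  rw [hsec] at hft
  rw [eq_sub_iff_add_eq]
  exact hft

lemma main (a b : A) (c : ℕ → A) (hc0 : c 0 = b)
    (hcs : ∀ j, c (j + 1) = a * c j - c j * a) (t : ℝ) :
    ∀ n : ℕ, 1 ≤ n →
      exp ((-(t:ℂ)) • a) * b
        = (∑ j ∈ Finset.range n,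
            ((-(t:ℂ)) ^ j / (j.factorial : ℂ)) • (c j * exp ((-(t:ℂ)) • a)))
          + ((-(t:ℂ)) ^ n / ((n-1).factorial : ℂ)) •
              ∫ s in (0:ℝ)..1, ((1-s)^(n-1) : ℝ) • P a (c n) t s := by
  intro n hn
  induction n, hn using Nat.le_induction with
  | base =>
    have hf := ftcP a b t
    have hc1 : a * b - b * a = c 1 := by rw [hcs 0, hc0]
    rw [hc1] at hf
    simp only [Finset.sum_range_one, pow_zero, Nat.factorial_zero, Nat.cast_one, div_one,
      one_smul, hc0, pow_one, Nat.sub_self]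
    rw [← sub_eq_iff_eq_add']
    exact hf
  | succ n hn ih =>
    rw [ih]
    have hs := stepP a (c n) t n hn
    rw [← hcs n] at hs
    rw [Nat.add_sub_cancel, hs, Finset.sum_range_succ]
    rw [smul_sub, add_assoc]
    congr 1
    have hn0 : (n:ℂ) ≠ 0 := Nat.cast_ne_zero.mpr (by omega)
    have hfa : ((n-1).factorial : ℂ) ≠ 0 := Nat.cast_ne_zero.mpr (Nat.factorial_ne_zero _)
    have hfac : (n.factorial : ℂ) = (n : ℂ) * ((n-1).factorial : ℂ) := by
      rw [← Nat.cast_mul, Nat.mul_factorial_pred (by omega)]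
    rw [real_smul_eq, smul_smul, smul_smul, sub_eq_add_neg, ← neg_smul]
    congr 1
    · congr 1
      push_cast
      rw [hfac]
      field_simp
    · congr 1
      rw [hfac]
      push_cast
      field_simp
      ring

end Stmt12Aux


open scoped Nat

/-- Duhamel-type commutator expansion in a complex unital Banach algebra:
with `∇⁰b = b`, `∇^{j+1}b = [a, ∇^j b]`, for every `t ∈ ℝ` and `n ≥ 1`,
`e^{−ta}·b = Σ_{j<n} ((−t)^j/j!) ∇^j b · e^{−ta}
  + ((−t)^n/(n−1)!) ∫₀¹ (1−s)^{n−1} e^{−sta} (∇^n b) e^{−(1−s)ta} ds`. -/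
theorem stmt12 {A : Type*} [NormedRing A] [NormedAlgebra ℂ A] [CompleteSpace A]
    (a b : A) (c : ℕ → A) (hc0 : c 0 = b)
    (hcs : ∀ j, c (j + 1) = a * c j - c j * a) :
    ∀ t : ℝ, ∀ n : ℕ, 1 ≤ n →
      NormedSpace.exp ((-(t : ℂ)) • a) * b =
        (∑ j ∈ Finset.range n,
          ((-(t : ℂ)) ^ j / (j.factorial : ℂ)) •
            (c j * NormedSpace.exp ((-(t : ℂ)) • a)))
        + ((-(t : ℂ)) ^ n / ((n - 1).factorial : ℂ)) •
            ∫ s in (0 : ℝ)..1, ((1 - s) ^ (n - 1)) •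
              (NormedSpace.exp ((-(s * t : ℝ) : ℂ) • a) * c n *
                NormedSpace.exp ((-((1 - s) * t : ℝ) : ℂ) • a)) := by
  intro t n hn
  simpa only [Complex.ofReal_neg, Complex.ofReal_mul, Complex.ofReal_sub, Complex.ofReal_one,
    Stmt12Aux.P] using Stmt12Aux.main a b c hc0 hcs t n hn
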